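/- arXiv:2108.05619 — 2 statements merged into one kernel-verified Lean document; each statement's English description precedes it below -/
import Mathlib

section
/- Let X be a real locally convex space and g : X → (-∞, ∞] convex. Suppose x, y ∈ X with g finite on the segment [x,y], let z = (x+y)/2, and suppose g is affine on [x,y] and z' is a subgradient of g at z. Then z' is also a subgradient of g at x (and at y). -/
/-- If `g` is convex, finite and affine on the segment `[x,y]`, `z = (x+y)/2`, and `z'` is a
subgradient of `g` at `z`, then `z'` is also a subgradient of `g` at `x` and at `y`. -/
theorem stmt10 {X : Type*} [AddCommGroup X] [Module ℝ X] [TopologicalSpace X]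
    [IsTopologicalAddGroup X] [ContinuousSMul ℝ X]
    (g : X → EReal) (hbot : ∀ x, g x ≠ ⊥)
    (hconv : ∀ x y : X, ∀ l : ℝ, 0 < l → l < 1 →
      g (l • x + (1 - l) • y) ≤ (l : EReal) * g x + ((1 - l : ℝ) : EReal) * g y)
    (x y : X)
    (hfin : ∀ a ∈ segment ℝ x y, g a ≠ ⊤)
    (haff : ∀ l : ℝ, 0 ≤ l → l ≤ 1 →
      g (l • x + (1 - l) • y) = (l : EReal) * g x + ((1 - l : ℝ) : EReal) * g y)
    (z' : X →L[ℝ] ℝ)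
    (hsub : ∀ a : X,
      g ((2⁻¹ : ℝ) • (x + y)) + ((z' (a - (2⁻¹ : ℝ) • (x + y)) : ℝ) : EReal) ≤ g a) :
    (∀ a : X, g x + ((z' (a - x) : ℝ) : EReal) ≤ g a) ∧
    (∀ a : X, g y + ((z' (a - y) : ℝ) : EReal) ≤ g a) := by
  obtain ⟨rx, hrx⟩ : ∃ r : ℝ, g x = (r : EReal) :=
    ⟨(g x).toReal, (EReal.coe_toReal (hfin x (left_mem_segment ℝ x y)) (hbot x)).symm⟩
  obtain ⟨ry, hry⟩ : ∃ r : ℝ, g y = (r : EReal) :=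
    ⟨(g y).toReal, (EReal.coe_toReal (hfin y (right_mem_segment ℝ x y)) (hbot y)).symm⟩
  have hzx : (2⁻¹ : ℝ) • (x + y) = (2⁻¹ : ℝ) • x + ((1 - 2⁻¹ : ℝ)) • y := by
    rw [smul_add]; norm_num
  have hz : g ((2⁻¹ : ℝ) • (x + y)) = ((2⁻¹ * rx + 2⁻¹ * ry : ℝ) : EReal) := by
    rw [hzx, haff 2⁻¹ (by norm_num) (by norm_num), hrx, hry,
      ← EReal.coe_mul, ← EReal.coe_mul, ← EReal.coe_add]
    norm_num
  constructor
  · intro a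
    by_cases hat : g a = ⊤
    · rw [hat]; exact le_top
    obtain ⟨ra, hra⟩ : ∃ r : ℝ, g a = (r : EReal) :=
      ⟨(g a).toReal, (EReal.coe_toReal hat (hbot a)).symm⟩
    have hvec : ((2⁻¹ : ℝ) • a + (1 - 2⁻¹ : ℝ) • y) - (2⁻¹ : ℝ) • (x + y)
        = (2⁻¹ : ℝ) • (a - x) := by module
    have h1 := hsub ((2⁻¹ : ℝ) • a + (1 - 2⁻¹ : ℝ) • y)
    rw [hvec, map_smul, hz] at h1
    have h2 := hconv a y 2⁻¹ (by norm_num) (by norm_num)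
    rw [hra, hry] at h2
    have h3 : ((2⁻¹ * rx + 2⁻¹ * ry + 2⁻¹ * z' (a - x) : ℝ) : EReal)
        ≤ ((2⁻¹ * ra + 2⁻¹ * ry : ℝ) : EReal) := by
      calc ((2⁻¹ * rx + 2⁻¹ * ry + 2⁻¹ * z' (a - x) : ℝ) : EReal)
          = ((2⁻¹ * rx + 2⁻¹ * ry : ℝ) : EReal) + ((2⁻¹ • z' (a - x) : ℝ) : EReal) := by
            rw [smul_eq_mul, ← EReal.coe_add]
        _ ≤ g ((2⁻¹ : ℝ) • a + (1 - 2⁻¹ : ℝ) • y) := h1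
        _ ≤ ((2⁻¹ : ℝ) : EReal) * (ra : EReal) + ((1 - 2⁻¹ : ℝ) : EReal) * (ry : EReal) := h2
        _ = ((2⁻¹ * ra + 2⁻¹ * ry : ℝ) : EReal) := by
            rw [← EReal.coe_mul, ← EReal.coe_mul, ← EReal.coe_add]; norm_cast; ring
    have h4 := EReal.coe_le_coe_iff.mp h3
    rw [hrx, hra, ← EReal.coe_add]
    exact EReal.coe_le_coe_iff.mpr (by linarith)
  · intro a
    by_cases hat : g a = ⊤
    · rw [hat]; exact le_top
    obtain ⟨ra, hra⟩ : ∃ r : ℝ, g a = (r : EReal) :=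
      ⟨(g a).toReal, (EReal.coe_toReal hat (hbot a)).symm⟩
    have hvec : ((2⁻¹ : ℝ) • x + (1 - 2⁻¹ : ℝ) • a) - (2⁻¹ : ℝ) • (x + y)
        = (2⁻¹ : ℝ) • (a - y) := by module
    have h1 := hsub ((2⁻¹ : ℝ) • x + (1 - 2⁻¹ : ℝ) • a)
    rw [hvec, map_smul, hz] at h1
    have h2 := hconv x a 2⁻¹ (by norm_num) (by norm_num)
    rw [hra, hrx] at h2
    have h3 : ((2⁻¹ * rx + 2⁻¹ * ry + 2⁻¹ * z' (a - y) : ℝ) : EReal)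
        ≤ ((2⁻¹ * rx + 2⁻¹ * ra : ℝ) : EReal) := by
      calc ((2⁻¹ * rx + 2⁻¹ * ry + 2⁻¹ * z' (a - y) : ℝ) : EReal)
          = ((2⁻¹ * rx + 2⁻¹ * ry : ℝ) : EReal) + ((2⁻¹ • z' (a - y) : ℝ) : EReal) := by
            rw [smul_eq_mul, ← EReal.coe_add]
        _ ≤ g ((2⁻¹ : ℝ) • x + (1 - 2⁻¹ : ℝ) • a) := h1
        _ ≤ ((2⁻¹ : ℝ) : EReal) * (rx : EReal) + ((1 - 2⁻¹ : ℝ) : EReal) * (ra : EReal) := h2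
        _ = ((2⁻¹ * rx + 2⁻¹ * ra : ℝ) : EReal) := by
            rw [← EReal.coe_mul, ← EReal.coe_mul, ← EReal.coe_add]; norm_cast; ring
    have h4 := EReal.coe_le_coe_iff.mp h3
    rw [hry, hra, ← EReal.coe_add]
    exact EReal.coe_le_coe_iff.mpr (by linarith)
end

section
/- Let X be a real locally convex space and f : X → (-∞, ∞] such that f** is essentially strictly convex and f(x) = f**(x) for all x ∈ dom(∂f**). Then for every x' ∈ X', the tilted function x ↦ f(x) - ⟨x', x⟩ has at most one global minimizer. -/
/-- The convex (Fenchel) conjugate of `f : X → (-∞,∞]`. -/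
noncomputable def fenchelConj {X : Type*} [AddCommGroup X] [Module ℝ X] [TopologicalSpace X]
    (f : X → EReal) (x' : X →L[ℝ] ℝ) : EReal :=
  ⨆ x : X, ((x' x : ℝ) : EReal) - f x

/-- The biconjugate `f**`. -/
noncomputable def fenchelBiconj {X : Type*} [AddCommGroup X] [Module ℝ X] [TopologicalSpace X]
    (f : X → EReal) (x : X) : EReal :=
  ⨆ x' : X →L[ℝ] ℝ, ((x' x : ℝ) : EReal) - fenchelConj f x'

/-- The Fenchel–Moreau subdifferential of `g` at `x`. -/
def fenchelSubdiff {X : Type*} [AddCommGroup X] [Module ℝ X] [TopologicalSpace X]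
    (g : X → EReal) (x : X) : Set (X →L[ℝ] ℝ) :=
  {x' | ∀ a : X, g x + ((x' (a - x) : ℝ) : EReal) ≤ g a}

private lemma ereal_cases (x : EReal) : x = ⊥ ∨ x = ⊤ ∨ ∃ r : ℝ, x = (r : EReal) := by
  induction x using EReal.rec with
  | bot => exact Or.inl rfl
  | top => exact Or.inr (Or.inl rfl)
  | coe r => exact Or.inr (Or.inr ⟨r, rfl⟩)

private lemma ereal_sub_swap (a : ℝ) (b c : EReal) (h : (a : EReal) - b ≤ c) :
    (a : EReal) - c ≤ b := by
  rcases ereal_cases b with hb | hb | ⟨r, hb⟩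
  · rw [hb, EReal.coe_sub_bot, top_le_iff] at h
    rw [h, EReal.sub_top, hb]
  · rw [hb]; exact le_top
  · rcases ereal_cases c with hc | hc | ⟨s, hc⟩
    · rw [hb, hc, ← EReal.coe_sub, le_bot_iff] at h
      exact absurd h (EReal.coe_ne_bot _)
    · rw [hc, EReal.sub_top, hb]; exact bot_le
    · rw [hb, hc, ← EReal.coe_sub, EReal.coe_le_coe_iff] at h
      rw [hb, hc, ← EReal.coe_sub, EReal.coe_le_coe_iff]
      linarith

/-- If `f**` is essentially strictly convex and `f = f**` on `dom(∂f**)`, then every tilted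
problem `min f - x'` has at most one global minimizer. -/
theorem stmt15 {X : Type*} [AddCommGroup X] [Module ℝ X] [TopologicalSpace X]
    [IsTopologicalAddGroup X] [ContinuousSMul ℝ X] [LocallyConvexSpace ℝ X]
    (f : X → EReal) (hbot : ∀ x, f x ≠ ⊥)
    (hessstrict : ∀ C : Set X,
      C ⊆ {x | (fenchelSubdiff (fenchelBiconj f) x).Nonempty} → Convex ℝ C →
      ∀ x ∈ C, ∀ y ∈ C, x ≠ y → ∀ l : ℝ, 0 < l → l < 1 →
        fenchelBiconj f (l • x + (1 - l) • y)
          < (l : EReal) * fenchelBiconj f x + ((1 - l : ℝ) : EReal) * fenchelBiconj f y)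
    (hagree : ∀ x : X, (fenchelSubdiff (fenchelBiconj f) x).Nonempty →
      f x = fenchelBiconj f x) :
    ∀ x' : X →L[ℝ] ℝ, ∀ x₀ x₁ : X,
      (∀ y, f x₀ - ((x' x₀ : ℝ) : EReal) ≤ f y - ((x' y : ℝ) : EReal)) →
      (∀ y, f x₁ - ((x' x₁ : ℝ) : EReal) ≤ f y - ((x' y : ℝ) : EReal)) →
      x₀ = x₁ := by
  intro x' x₀ x₁ h₀ h₁
  by_contra hne
  set g := fenchelBiconj f with hg
  have hc_le : ∀ (p : X →L[ℝ] ℝ) (y : X), ((p y : ℝ) : EReal) - f y ≤ fenchelConj f p :=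
    fun p y => le_iSup (fun x => ((p x : ℝ) : EReal) - f x) y
  have hg_ge : ∀ (p : X →L[ℝ] ℝ) (y : X), ((p y : ℝ) : EReal) - fenchelConj f p ≤ g y :=
    fun p y => le_iSup (fun q : X →L[ℝ] ℝ => ((q y : ℝ) : EReal) - fenchelConj f q) p
  by_cases htop : f x₀ = ⊤
  · -- degenerate case : f ≡ ⊤, g ≡ ⊤
    have hftop : ∀ y, f y = ⊤ := by
      intro y
      rcases ereal_cases (f y) with hb | ht | ⟨r, hr⟩
      · exact absurd hb (hbot y)
      · exact ht
      · have := h₀ y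
        rw [htop, hr, EReal.top_sub_coe, ← EReal.coe_sub, top_le_iff] at this
        exact absurd this (EReal.coe_ne_top _)
    have hcbot : ∀ p : X →L[ℝ] ℝ, fenchelConj f p = ⊥ := by
      intro p
      refine le_bot_iff.mp (iSup_le fun y => ?_)
      rw [hftop y, EReal.sub_top]
    have hgtop : ∀ y, g y = ⊤ := by
      intro y
      have := hg_ge x' y
      rwa [hcbot x', EReal.coe_sub_bot, top_le_iff] at this
    have hsub : ∀ z : X, (fenchelSubdiff g z).Nonempty := by
      intro z
      refine ⟨x', fun a => ?_⟩
      rw [hgtop z, hgtop a, EReal.top_add_coe]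
    have h := hessstrict Set.univ (fun z _ => hsub z) convex_univ x₀ trivial x₁ trivial hne
      (1/2) (by norm_num) (by norm_num)
    rw [hgtop, hgtop, hgtop] at h
    rw [show ((1/2 : ℝ) : EReal) * ⊤ = ⊤ from EReal.coe_mul_top_of_pos (by norm_num),
        show ((1 - 1/2 : ℝ) : EReal) * ⊤ = ⊤ from EReal.coe_mul_top_of_pos (by norm_num)] at h
    exact absurd h (by simp)
  · -- main case : f x₀ is real
    obtain ⟨r₀, hr₀⟩ : ∃ r : ℝ, f x₀ = (r : EReal) := by
      rcases ereal_cases (f x₀) with hb | ht | h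
      · exact absurd hb (hbot x₀)
      · exact absurd ht htop
      · exact h
    obtain ⟨r₁, hr₁⟩ : ∃ r : ℝ, f x₁ = (r : EReal) := by
      rcases ereal_cases (f x₁) with hb | ht | h
      · exact absurd hb (hbot x₁)
      · have := h₁ x₀
        rw [hr₀, ht, EReal.top_sub_coe, ← EReal.coe_sub, top_le_iff] at this
        exact absurd this (EReal.coe_ne_top _)
      · exact h
    have hmin : r₀ - x' x₀ = r₁ - x' x₁ := by
      have h1 := h₀ x₁
      have h2 := h₁ x₀
      rw [hr₀, hr₁, ← EReal.coe_sub, ← EReal.coe_sub, EReal.coe_le_coe_iff] at h1 h2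
      linarith
    have hc : fenchelConj f x' = ((x' x₀ - r₀ : ℝ) : EReal) := by
      refine le_antisymm (iSup_le fun y => ?_) ?_
      · rcases ereal_cases (f y) with hb | ht | ⟨s, hs⟩
        · exact absurd hb (hbot y)
        · rw [ht, EReal.sub_top]; exact bot_le
        · have := h₀ y
          rw [hr₀, hs, ← EReal.coe_sub, ← EReal.coe_sub, EReal.coe_le_coe_iff] at this
          rw [hs, ← EReal.coe_sub, EReal.coe_le_coe_iff]
          linarith
      · have := hc_le x' x₀
        rwa [hr₀, ← EReal.coe_sub] at this
    have hgx₀ : g x₀ = (r₀ : EReal) := by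
      refine le_antisymm ?_ ?_
      · refine iSup_le fun p => ereal_sub_swap _ _ _ ?_
        rw [← hr₀]; exact hc_le p x₀
      · have := hg_ge x' x₀
        rwa [hc, ← EReal.coe_sub, show x' x₀ - (x' x₀ - r₀) = r₀ by ring] at this
    have hgx₁ : g x₁ = (r₁ : EReal) := by
      refine le_antisymm ?_ ?_
      · refine iSup_le fun p => ereal_sub_swap _ _ _ ?_
        rw [← hr₁]; exact hc_le p x₁
      · have := hg_ge x' x₁
        rwa [hc, ← EReal.coe_sub, show x' x₁ - (x' x₀ - r₀) = r₁ by linarith] at this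
    have hgseg : ∀ t : ℝ, 0 ≤ t → t ≤ 1 →
        g (t • x₀ + (1 - t) • x₁) = ((t * r₀ + (1 - t) * r₁ : ℝ) : EReal) := by
      intro t ht0 ht1
      refine le_antisymm (iSup_le fun p => ?_) ?_
      · rcases ereal_cases (fenchelConj f p) with hcp | hcp | ⟨s, hcp⟩
        · exfalso
          have := hg_ge p x₀
          rw [hcp, EReal.coe_sub_bot, top_le_iff, hgx₀] at this
          exact EReal.coe_ne_top _ this
        · rw [hcp, EReal.sub_top]; exact bot_le
        · have hp0 : p x₀ - s ≤ r₀ := by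
            have := hg_ge p x₀
            rwa [hcp, hgx₀, ← EReal.coe_sub, EReal.coe_le_coe_iff] at this
          have hp1 : p x₁ - s ≤ r₁ := by
            have := hg_ge p x₁
            rwa [hcp, hgx₁, ← EReal.coe_sub, EReal.coe_le_coe_iff] at this
          have hpz : p (t • x₀ + (1 - t) • x₁) = t * p x₀ + (1 - t) * p x₁ := by
            simp [map_add, map_smul, smul_eq_mul]
          rw [hcp, ← EReal.coe_sub, EReal.coe_le_coe_iff, hpz]
          nlinarith
      · have := hg_ge x' (t • x₀ + (1 - t) • x₁)
        rw [hc, ← EReal.coe_sub] at this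
        have hxz : x' (t • x₀ + (1 - t) • x₁) = t * x' x₀ + (1 - t) * x' x₁ := by
          simp [map_add, map_smul, smul_eq_mul]
        rw [show x' (t • x₀ + (1 - t) • x₁) - (x' x₀ - r₀) = t * r₀ + (1 - t) * r₁ by
          rw [hxz]; nlinarith [hmin]] at this
        exact this
    have hsub : ∀ z ∈ segment ℝ x₀ x₁, (fenchelSubdiff g z).Nonempty := by
      rintro z ⟨a, b, ha, hb, hab, rfl⟩
      have hb' : b = 1 - a := by linarith
      subst hb'
      refine ⟨x', fun w => ?_⟩
      rw [hgseg a ha (by linarith)]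
      have hgw : ((x' w : ℝ) : EReal) - fenchelConj f x' ≤ g w := hg_ge x' w
      rw [hc, ← EReal.coe_sub] at hgw
      refine le_trans ?_ hgw
      rw [← EReal.coe_add, EReal.coe_le_coe_iff]
      have hxz : x' (w - (a • x₀ + (1 - a) • x₁)) = x' w - (a * x' x₀ + (1 - a) * x' x₁) := by
        simp [map_sub, map_add, map_smul, smul_eq_mul]
      rw [hxz]
      nlinarith [hmin]
    have h := hessstrict (segment ℝ x₀ x₁) hsub (convex_segment x₀ x₁)
      x₀ (left_mem_segment ℝ x₀ x₁) x₁ (right_mem_segment ℝ x₀ x₁) hne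
      (1/2) (by norm_num) (by norm_num)
    rw [hgseg (1/2) (by norm_num) (by norm_num), hgx₀, hgx₁, ← EReal.coe_mul, ← EReal.coe_mul,
      ← EReal.coe_add, EReal.coe_lt_coe_iff] at h
    linarith
end
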